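/- Let k ∈ {0,…,D−1}, let t_0 ≤ t be times and τ ≥ 0, and let v be a trajectory of the consensus system defined on [t_0, t+τ]. Assume the interaction graph G(s) satisfies Hypothesis 1 for all s ∈ [t, t+τ]. Then Δ_{U_{k+1}}(t+τ) ≤ Δ_N(t_0) − c_k(τ)·(Δ_N(t_0) − Δ_{U_k}(t)), where c_0(τ) = (1/(m+1))(1 − e^{−(m+1)τ}) and c_k(τ) = e^{−mτ}(e^{α_k τ} − 1) for k ≥ 1. -/

import Mathlib

open scoped Classical
open Set Filter Real
open scoped Topology

section helpers


lemma contOn_sup' {ι : Type*} {g : ι → ℝ → ℝ} {A : Set ℝ} (S : Finset ι) (hS : S.Nonempty)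
    (hg : ∀ i ∈ S, ContinuousOn (g i) A) :
    ContinuousOn (fun s => S.sup' hS fun i => g i s) A := by
  induction hS using Finset.Nonempty.cons_induction with
  | singleton a => simpa using hg a (by simp)
  | cons a s ha hs ih =>
    simp only [Finset.sup'_cons hs]
    exact ContinuousOn.sup (hg a (by simp)) (ih fun i hi => hg i (by simp [hi]))

lemma maxGron {ι : Type*} {S : Finset ι} (hS : S.Nonempty) {g g' : ι → ℝ → ℝ}
    {a b K ε δ : ℝ}
    (hg : ∀ i ∈ S, ∀ s ∈ Set.Icc a b, HasDerivAt (g i) (g' i s) s)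
    (hδ : (S.sup' hS fun i => g i a) ≤ δ)
    (hbound : ∀ s ∈ Set.Ico a b, ∀ i ∈ S, g i s = (S.sup' hS fun j => g j s) →
      g' i s ≤ K * (S.sup' hS fun j => g j s) + ε) :
    ∀ s ∈ Set.Icc a b, (S.sup' hS fun i => g i s) ≤ gronwallBound δ K ε (s - a) := by
  set f : ℝ → ℝ := fun s => S.sup' hS fun i => g i s with hf
  apply le_gronwallBound_of_liminf_deriv_right_le (f' := fun s => K * f s + ε)
  · exact contOn_sup' S hS fun i hi s hs => (hg i hi s hs).continuousAt.continuousWithinAt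
  · intro x hx r hr
    have hev : ∀ i ∈ S, ∀ᶠ z in 𝓝[>] x, g i z - f x < r * (z - x) := by
      intro i hi
      rcases eq_or_lt_of_le (Finset.le_sup' (fun j => g j x) hi) with hcase | hcase
      · -- argmax agent
        have hd := hg i hi x (Ico_subset_Icc_self hx)
        have hslope : Tendsto (slope (g i) x) (𝓝[>] x) (𝓝 (g' i x)) :=
          (hasDerivAt_iff_tendsto_slope.1 hd).mono_left
            (nhdsWithin_mono x fun z hz => ne_of_gt hz)
        have hlt : g' i x < r := lt_of_le_of_lt (hbound x hx i hi hcase) hr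
        filter_upwards [hslope.eventually_lt_const hlt, self_mem_nhdsWithin] with z hz hz'
        have hzx : (0:ℝ) < z - x := sub_pos.2 hz'
        rw [slope_def_field] at hz
        rw [div_lt_iff₀ hzx] at hz
        have hgx : g i x = f x := hcase
        linarith
      · -- strictly below max
        have hcont : ContinuousAt (g i) x := (hg i hi x (Ico_subset_Icc_self hx)).continuousAt
        set c := (f x - g i x) / 2 with hc
        have hc0 : 0 < c := by rw [hc]; linarith
        have h1 : ∀ᶠ z in 𝓝 x, g i z < f x - c := by
          apply hcont.tendsto.eventually_lt_const; linarith
        have h2 : Tendsto (fun z => r * (z - x)) (𝓝 x) (𝓝 0) := by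
          have h2' : Tendsto (fun z : ℝ => z - x) (𝓝 x) (𝓝 (x - x)) := tendsto_id.sub_const x
          rw [sub_self] at h2'
          simpa using h2'.const_mul r
        have h3 : ∀ᶠ z in 𝓝 x, -c < r * (z - x) := h2.eventually_const_lt (by linarith)
        filter_upwards [nhdsWithin_le_nhds (h1.and h3)] with z hz
        obtain ⟨hz1, hz2⟩ := hz
        linarith
    have hall : ∀ᶠ z in 𝓝[>] x, ∀ i ∈ S, g i z - f x < r * (z - x) :=
      (Filter.eventually_all_finset S).2 hev
    apply Filter.Eventually.frequently
    filter_upwards [hall, self_mem_nhdsWithin] with z hz hz'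
    have hzx : (0:ℝ) < z - x := sub_pos.2 hz'
    have hfz : f z < f x + r * (z - x) := by
      rw [hf]
      exact (Finset.sup'_lt_iff hS).2 fun i hi => by linarith [hz i hi]
    rw [inv_mul_lt_iff₀ hzx]
    nlinarith
  · exact hδ
  · exact fun x _ => le_refl _

lemma gb_calc (δ K M x : ℝ) : gronwallBound δ K (-K*M) x = M + (δ - M) * Real.exp (K*x) := by
  by_cases hK : K = 0
  · simp [gronwallBound, hK]
  · simp only [gronwallBound, if_neg hK]
    field_simp
    ring

lemma deriv_nonpos_le {g g' : ℝ → ℝ} {a b : ℝ} (hab : a ≤ b)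
    (h : ∀ s ∈ Set.Icc a b, HasDerivAt g (g' s) s) (h0 : ∀ s ∈ Set.Icc a b, g' s ≤ 0) :
    g b ≤ g a := by
  have hanti : AntitoneOn g (Set.Icc a b) := by
    apply antitoneOn_of_deriv_nonpos (convex_Icc a b)
    · exact fun s hs => (h s hs).continuousAt.continuousWithinAt
    · intro s hs
      rw [interior_Icc] at hs
      exact (h s (Ioo_subset_Icc_self hs)).differentiableAt.differentiableWithinAt
    · intro s hs
      rw [interior_Icc] at hs
      rw [(h s (Ioo_subset_Icc_self hs)).deriv]
      exact h0 s (Ioo_subset_Icc_self hs)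
  exact hanti (left_mem_Icc.2 hab) (right_mem_Icc.2 hab) hab

section scalar
variable {n : ℕ} {m : ℕ} {a : ℝ → Fin n → Fin n → ℝ} {x : Fin n → ℝ → ℝ} {t0 T : ℝ}

/-- Invariance: every coordinate stays below the initial max. -/
lemma scalar_inv (hn : (Finset.univ : Finset (Fin n)).Nonempty)
    (ha0 : ∀ s i j, 0 ≤ a s i j) (ht : t0 ≤ T)
    (hx : ∀ i, ∀ s ∈ Set.Icc t0 T, HasDerivAt (x i) (∑ j, a s i j * (x j s - x i s)) s) :
    ∀ s ∈ Set.Icc t0 T, ∀ i, x i s ≤ Finset.univ.sup' hn fun i => x i t0 := by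
  set M := Finset.univ.sup' hn fun i => x i t0 with hM
  have key := maxGron (a := t0) (b := T) (K := 0) (ε := 0) (δ := M) hn
    (g := fun i s => x i s) (g' := fun i s => ∑ j, a s i j * (x j s - x i s))
    (fun i _ s hs => hx i s hs) (le_refl M) ?_
  · intro s hs i
    have h1 := key s hs
    have h2 : x i s ≤ Finset.univ.sup' hn fun j => x j s :=
      Finset.le_sup' (fun j => x j s) (Finset.mem_univ i)
    rw [gronwallBound_K0] at h1
    simpa using h2.trans h1
  · intro s _ i _ hmax
    rw [zero_mul, zero_add]
    apply Finset.sum_nonpos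
    intro j _
    apply mul_nonpos_of_nonneg_of_nonpos (ha0 s i j)
    have := Finset.le_sup' (fun l => x l s) (Finset.mem_univ j)
    rw [← hmax] at this
    linarith

/-- Decay of the max over a subgroup `S`. -/
lemma scalar_step2 {S : Finset (Fin n)} (hS : S.Nonempty) {t τ M α : ℝ}
    (hτ : 0 ≤ τ) (ha0 : ∀ s i j, 0 ≤ a s i j) (hreg : ∀ s i, ∑ j, a s i j = (m : ℝ))
    (hx : ∀ i, ∀ s ∈ Set.Icc t (t+τ), HasDerivAt (x i) (∑ j, a s i j * (x j s - x i s)) s)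
    (hM : ∀ s ∈ Set.Icc t (t+τ), ∀ i, x i s ≤ M)
    (hout : ∀ s ∈ Set.Icc t (t+τ), ∀ i ∈ S, ∑ j ∈ Sᶜ, a s i j ≤ (m : ℝ) - α) :
    ∀ s ∈ Set.Icc t (t+τ), (S.sup' hS fun i => x i s) ≤
      M + ((S.sup' hS fun i => x i t) - M) * Real.exp ((α - m) * (s - t)) := by
  classical
  set MS := S.sup' hS fun i => x i t with hMS
  have key := maxGron (a := t) (b := t+τ) (K := α - m) (ε := ((m : ℝ) - α) * M) (δ := MS) hS
    (g := fun i s => x i s) (g' := fun i s => ∑ j, a s i j * (x j s - x i s))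
    (fun i _ s hs => hx i s hs) (le_refl MS) ?_
  · intro s hs
    have h1 := key s hs
    have : gronwallBound MS (α - m) (((m:ℝ) - α) * M) (s - t) =
        M + (MS - M) * Real.exp ((α - m) * (s - t)) := by
      have : ((m:ℝ) - α) * M = -(α - m) * M := by ring
      rw [this, gb_calc]
    rwa [this] at h1
  · intro s hs i hiS hmax
    set f := S.sup' hS fun j => x j s with hfd
    have hfM : f ≤ M := by
      rw [hfd]
      apply Finset.sup'_le
      exact fun j _ => hM s (Ico_subset_Icc_self hs) j
    have hsplit : ∑ j, a s i j * (x j s - x i s)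
        = ∑ j ∈ S, a s i j * (x j s - x i s) + ∑ j ∈ Sᶜ, a s i j * (x j s - x i s) :=
      (Finset.sum_add_sum_compl S _).symm
    have hmax' : x i s = f := hmax
    have h1 : ∑ j ∈ S, a s i j * (x j s - x i s) ≤ 0 := by
      apply Finset.sum_nonpos
      intro j hj
      apply mul_nonpos_of_nonneg_of_nonpos (ha0 s i j)
      have := Finset.le_sup' (fun l => x l s) hj
      rw [← hfd] at this
      rw [hmax']
      linarith
    have h2 : ∑ j ∈ Sᶜ, a s i j * (x j s - x i s) ≤ ((m:ℝ) - α) * (M - f) := by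
      have hterm : ∀ j ∈ Sᶜ, a s i j * (x j s - x i s) ≤ a s i j * (M - f) := by
        intro j _
        apply mul_le_mul_of_nonneg_left _ (ha0 s i j)
        have := hM s (Ico_subset_Icc_self hs) j
        rw [hmax']
        linarith
      calc ∑ j ∈ Sᶜ, a s i j * (x j s - x i s) ≤ ∑ j ∈ Sᶜ, a s i j * (M - f) :=
            Finset.sum_le_sum hterm
        _ = (∑ j ∈ Sᶜ, a s i j) * (M - f) := by rw [← Finset.sum_mul]
        _ ≤ ((m:ℝ) - α) * (M - f) := by
            apply mul_le_mul_of_nonneg_right (hout s (Ico_subset_Icc_self hs) i hiS)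
            linarith
    show ∑ j, a s i j * (x j s - x i s) ≤ (α - m) * (S.sup' hS fun j => x j s) + ((m:ℝ) - α) * M
    rw [hsplit, ← hfd]
    have : (α - m) * f + ((m:ℝ) - α) * M = ((m:ℝ) - α) * (M - f) := by ring
    rw [this]
    linarith
end scalar

section scalar2
variable {n : ℕ} {m : ℕ} {a : ℝ → Fin n → Fin n → ℝ} {x : Fin n → ℝ → ℝ}

/-- Single-agent improvement, `k ≥ 1` case. -/
lemma scalar_step3 {S : Finset (Fin n)} (hS : S.Nonempty) {t τ M α : ℝ} {i : Fin n}
    (hτ : 0 ≤ τ) (ha0 : ∀ s i j, 0 ≤ a s i j) (hreg : ∀ s i, ∑ j, a s i j = (m : ℝ))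
    (hα0 : 0 ≤ α)
    (hx : ∀ i, ∀ s ∈ Set.Icc t (t+τ), HasDerivAt (x i) (∑ j, a s i j * (x j s - x i s)) s)
    (hM : ∀ s ∈ Set.Icc t (t+τ), ∀ i, x i s ≤ M)
    (hB : ∀ s ∈ Set.Icc t (t+τ), ∀ j ∈ S, x j s ≤
      M + ((S.sup' hS fun l => x l t) - M) * Real.exp ((α - m) * (s - t)))
    (hin : ∀ s ∈ Set.Icc t (t+τ), α ≤ ∑ j ∈ S, a s i j) :
    x i (t+τ) ≤ M - Real.exp (-(m:ℝ)*τ) * (Real.exp (α*τ) - 1) *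
      (M - S.sup' hS fun l => x l t) := by
  classical
  set MS := S.sup' hS fun l => x l t with hMSdef
  have hMSM : MS ≤ M := by
    apply Finset.sup'_le
    intro j hj
    exact hM t (by constructor <;> [exact le_refl t; linarith]) j
  set g : ℝ → ℝ := fun s => Real.exp ((m:ℝ)*(s-t)) * (x i s - M)
    + (M - MS) * (Real.exp (α*(s-t)) - 1) with hg
  set g' : ℝ → ℝ := fun s => ((m:ℝ) * Real.exp ((m:ℝ)*(s-t))) * (x i s - M)
    + Real.exp ((m:ℝ)*(s-t)) * (∑ j, a s i j * (x j s - x i s))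
    + (M - MS) * (α * Real.exp (α*(s-t))) with hg'
  have hgd : ∀ s ∈ Set.Icc t (t+τ), HasDerivAt g (g' s) s := by
    intro s hs
    have h1 : HasDerivAt (fun s => Real.exp ((m:ℝ)*(s-t))) ((m:ℝ) * Real.exp ((m:ℝ)*(s-t))) s := by
      have hid : HasDerivAt (fun s : ℝ => (m:ℝ)*(s-t)) ((m:ℝ)) s := by
        simpa using ((hasDerivAt_id s).sub_const t).const_mul (m:ℝ)
      simpa [mul_comm] using hid.exp
    have h2 : HasDerivAt (fun s => x i s - M) (∑ j, a s i j * (x j s - x i s)) s :=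
      (hx i s hs).sub_const M
    have h3 : HasDerivAt (fun s => Real.exp (α*(s-t)) - 1) (α * Real.exp (α*(s-t))) s := by
      have hid : HasDerivAt (fun s : ℝ => α*(s-t)) α s := by
        simpa using ((hasDerivAt_id s).sub_const t).const_mul α
      simpa [mul_comm] using hid.exp.sub_const 1
    exact (h1.mul h2).add (h3.const_mul (M - MS))
  have hg0 : ∀ s ∈ Set.Icc t (t+τ), g' s ≤ 0 := by
    intro s hs
    have hE : (0:ℝ) < Real.exp ((m:ℝ)*(s-t)) := Real.exp_pos _
    set β := ∑ j ∈ S, a s i j with hβ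
    have hβα : α ≤ β := hin s hs
    set B : ℝ := M + (MS - M) * Real.exp ((α - m) * (s - t)) with hBdef
    have hBM : B ≤ M := by
      have : (MS - M) * Real.exp ((α - m) * (s - t)) ≤ 0 :=
        mul_nonpos_of_nonpos_of_nonneg (by linarith) (Real.exp_pos _).le
      rw [hBdef]; linarith
    have hsplit : ∑ j, a s i j * (x j s - x i s)
        = ∑ j ∈ S, a s i j * (x j s - x i s) + ∑ j ∈ Sᶜ, a s i j * (x j s - x i s) :=
      (Finset.sum_add_sum_compl S _).symm
    have hcompl : ∑ j ∈ Sᶜ, a s i j = (m:ℝ) - β := by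
      have := Finset.sum_add_sum_compl S (fun j => a s i j)
      rw [hreg s i] at this
      linarith
    have h1 : ∑ j ∈ S, a s i j * (x j s - x i s) ≤ β * (B - x i s) := by
      rw [hβ, Finset.sum_mul]
      apply Finset.sum_le_sum
      intro j hj
      apply mul_le_mul_of_nonneg_left _ (ha0 s i j)
      have := hB s hs j hj
      rw [hBdef]
      linarith
    have h2 : ∑ j ∈ Sᶜ, a s i j * (x j s - x i s) ≤ ((m:ℝ) - β) * (M - x i s) := by
      rw [← hcompl, Finset.sum_mul]
      apply Finset.sum_le_sum
      intro j _
      apply mul_le_mul_of_nonneg_left _ (ha0 s i j)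
      have := hM s hs j
      linarith
    have hxd : ∑ j, a s i j * (x j s - x i s) ≤ α * B + ((m:ℝ) - α) * M - m * x i s := by
      have hswap : β * (B - x i s) + ((m:ℝ) - β) * (M - x i s)
          ≤ α * B + ((m:ℝ) - α) * M - m * x i s := by nlinarith [hβα, hBM]
      rw [hsplit]; linarith
    have hforce : α * B + ((m:ℝ) - α) * M - m * x i s + (m:ℝ) * (x i s - M)
        = α * (MS - M) * Real.exp ((α - m) * (s - t)) := by
      rw [hBdef]; ring
    have hexpmul : Real.exp ((m:ℝ)*(s-t)) * Real.exp ((α - m) * (s - t))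
        = Real.exp (α * (s-t)) := by
      rw [← Real.exp_add]; ring_nf
    have hg'val : g' s = ((m:ℝ) * Real.exp ((m:ℝ)*(s-t))) * (x i s - M)
        + Real.exp ((m:ℝ)*(s-t)) * (∑ j, a s i j * (x j s - x i s))
        + (M - MS) * (α * Real.exp (α*(s-t))) := rfl
    have : g' s ≤ Real.exp ((m:ℝ)*(s-t)) * (α * (MS - M) * Real.exp ((α - m) * (s - t)))
        + (M - MS) * (α * Real.exp (α*(s-t))) := by
      rw [hg'val]
      have hmain : Real.exp ((m:ℝ)*(s-t)) * (∑ j, a s i j * (x j s - x i s))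
          + ((m:ℝ) * Real.exp ((m:ℝ)*(s-t))) * (x i s - M)
          ≤ Real.exp ((m:ℝ)*(s-t)) * (α * (MS - M) * Real.exp ((α - m) * (s - t))) := by
        have := mul_le_mul_of_nonneg_left hxd hE.le
        calc Real.exp ((m:ℝ)*(s-t)) * (∑ j, a s i j * (x j s - x i s))
            + ((m:ℝ) * Real.exp ((m:ℝ)*(s-t))) * (x i s - M)
            = Real.exp ((m:ℝ)*(s-t)) * ((∑ j, a s i j * (x j s - x i s)) + (m:ℝ)*(x i s - M)) := by
              ring
          _ ≤ Real.exp ((m:ℝ)*(s-t)) * (α * B + ((m:ℝ) - α) * M - m * x i s + (m:ℝ)*(x i s - M)) := by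
              apply mul_le_mul_of_nonneg_left _ hE.le
              linarith
          _ = Real.exp ((m:ℝ)*(s-t)) * (α * (MS - M) * Real.exp ((α - m) * (s - t))) := by
              rw [hforce]
      linarith
    calc g' s ≤ Real.exp ((m:ℝ)*(s-t)) * (α * (MS - M) * Real.exp ((α - m) * (s - t)))
          + (M - MS) * (α * Real.exp (α*(s-t))) := this
      _ = α * (MS - M) * (Real.exp ((m:ℝ)*(s-t)) * Real.exp ((α - m) * (s - t)))
          + (M - MS) * (α * Real.exp (α*(s-t))) := by ring
      _ = 0 := by rw [hexpmul]; ring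
  have hgend : g (t+τ) ≤ g t := deriv_nonpos_le (by linarith) hgd hg0
  have hgt : g t = x i t - M := by
    rw [hg]; simp
  have hxit : x i t - M ≤ 0 := by
    have := hM t (by constructor <;> [exact le_refl t; linarith]) i
    linarith
  have hfinal : Real.exp ((m:ℝ)*τ) * (x i (t+τ) - M) + (M - MS) * (Real.exp (α*τ) - 1) ≤ 0 := by
    have : g (t+τ) = Real.exp ((m:ℝ)*τ) * (x i (t+τ) - M) + (M - MS) * (Real.exp (α*τ) - 1) := by
      rw [hg]; ring_nf
    rw [← this]
    linarith [hgend, hgt, hxit]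
  have hEτ : Real.exp (-(m:ℝ)*τ) * Real.exp ((m:ℝ)*τ) = 1 := by
    rw [← Real.exp_add]; ring_nf; exact Real.exp_zero
  have hmul := mul_le_mul_of_nonneg_left hfinal (Real.exp_pos (-(m:ℝ)*τ)).le
  rw [mul_zero] at hmul
  have h5 : Real.exp (-(m:ℝ)*τ) * (Real.exp ((m:ℝ)*τ) * (x i (t + τ) - M) + (M - MS) * (Real.exp (α*τ) - 1))
      = Real.exp (-(m:ℝ)*τ) * Real.exp ((m:ℝ)*τ) * (x i (t + τ) - M)
        + Real.exp (-(m:ℝ)*τ) * (Real.exp (α*τ) - 1) * (M - MS) := by ring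
  rw [hEτ, one_mul] at h5
  rw [h5] at hmul
  linarith
end scalar2

section scalar3
variable {n : ℕ} {m : ℕ} {a : ℝ → Fin n → Fin n → ℝ} {x : Fin n → ℝ → ℝ}

/-- Pairwise contraction for agents directly connected to the root, `k = 0` case. -/
lemma scalar_k0 (hm : 1 ≤ m) {t τ M μ : ℝ} {r i j : Fin n}
    (hτ : 0 ≤ τ) (ha0 : ∀ s i j, 0 ≤ a s i j) (hreg : ∀ s i, ∑ j, a s i j = (m : ℝ))
    (hx : ∀ i, ∀ s ∈ Set.Icc t (t+τ), HasDerivAt (x i) (∑ j, a s i j * (x j s - x i s)) s)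
    (hM : ∀ s ∈ Set.Icc t (t+τ), ∀ i, x i s ≤ M)
    (hμ : ∀ s ∈ Set.Icc t (t+τ), ∀ i, μ ≤ x i s)
    (hir : ∀ s ∈ Set.Icc t (t+τ), a s i r = 1) (hjr : ∀ s ∈ Set.Icc t (t+τ), a s j r = 1) :
    x i (t+τ) - x j (t+τ) ≤ (M - μ) * (1 - (1 - Real.exp (-(m:ℝ)*τ)) / m) := by
  classical
  have hm0 : (0:ℝ) < (m:ℝ) := by exact_mod_cast Nat.pos_of_ne_zero (by omega)
  set g : ℝ → ℝ := fun s => Real.exp ((m:ℝ)*(s-t)) * (x i s - x j s)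
    - ((m:ℝ) - 1)/m * (M - μ) * (Real.exp ((m:ℝ)*(s-t)) - 1) with hg
  set g' : ℝ → ℝ := fun s => ((m:ℝ) * Real.exp ((m:ℝ)*(s-t))) * (x i s - x j s)
    + Real.exp ((m:ℝ)*(s-t)) * ((∑ l, a s i l * (x l s - x i s)) - (∑ l, a s j l * (x l s - x j s)))
    - ((m:ℝ) - 1)/m * (M - μ) * ((m:ℝ) * Real.exp ((m:ℝ)*(s-t))) with hg'
  have hgd : ∀ s ∈ Set.Icc t (t+τ), HasDerivAt g (g' s) s := by
    intro s hs
    have h1 : HasDerivAt (fun s => Real.exp ((m:ℝ)*(s-t))) ((m:ℝ) * Real.exp ((m:ℝ)*(s-t))) s := by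
      have hid : HasDerivAt (fun s : ℝ => (m:ℝ)*(s-t)) ((m:ℝ)) s := by
        simpa using ((hasDerivAt_id s).sub_const t).const_mul (m:ℝ)
      simpa [mul_comm] using hid.exp
    have h2 : HasDerivAt (fun s => x i s - x j s)
        ((∑ l, a s i l * (x l s - x i s)) - (∑ l, a s j l * (x l s - x j s))) s :=
      (hx i s hs).sub (hx j s hs)
    have h3 : HasDerivAt (fun s => Real.exp ((m:ℝ)*(s-t)) - 1) ((m:ℝ) * Real.exp ((m:ℝ)*(s-t))) s :=
      h1.sub_const 1
    exact (h1.mul h2).sub (h3.const_mul (((m:ℝ) - 1)/m * (M - μ)))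
  have hg0 : ∀ s ∈ Set.Icc t (t+τ), g' s ≤ 0 := by
    intro s hs
    have hE : (0:ℝ) < Real.exp ((m:ℝ)*(s-t)) := Real.exp_pos _
    -- derivative estimates
    have hsum : ∀ p : Fin n, (∑ l, a s p l * (x l s - x p s))
        = a s p r * (x r s - x p s) + ∑ l ∈ Finset.univ.erase r, a s p l * (x l s - x p s) := by
      intro p
      rw [← Finset.add_sum_erase _ _ (Finset.mem_univ r)]
    have herase : ∀ p : Fin n, a s p r = 1 → ∑ l ∈ Finset.univ.erase r, a s p l = (m:ℝ) - 1 := by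
      intro p hp
      have h0 := Finset.add_sum_erase Finset.univ (fun l => a s p l) (Finset.mem_univ r)
      have h1 : a s p r + ∑ l ∈ Finset.univ.erase r, a s p l = ∑ l, a s p l := h0
      rw [hreg s p, hp] at h1
      linarith
    have hi1 : (∑ l, a s i l * (x l s - x i s)) ≤ (x r s - x i s) + ((m:ℝ) - 1) * (M - x i s) := by
      rw [hsum i, hir s hs]
      have : ∑ l ∈ Finset.univ.erase r, a s i l * (x l s - x i s)
          ≤ ∑ l ∈ Finset.univ.erase r, a s i l * (M - x i s) := by
        apply Finset.sum_le_sum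
        intro l _
        exact mul_le_mul_of_nonneg_left (by linarith [hM s hs l]) (ha0 s i l)
      rw [← Finset.sum_mul] at this
      rw [herase i (hir s hs)] at this
      linarith
    have hj1 : (x r s - x j s) + ((m:ℝ) - 1) * (μ - x j s) ≤ ∑ l, a s j l * (x l s - x j s) := by
      rw [hsum j, hjr s hs]
      have : ∑ l ∈ Finset.univ.erase r, a s j l * (μ - x j s)
          ≤ ∑ l ∈ Finset.univ.erase r, a s j l * (x l s - x j s) := by
        apply Finset.sum_le_sum
        intro l _
        exact mul_le_mul_of_nonneg_left (by linarith [hμ s hs l]) (ha0 s j l)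
      rw [← Finset.sum_mul] at this
      rw [herase j (hjr s hs)] at this
      linarith
    have hbracket : (∑ l, a s i l * (x l s - x i s)) - (∑ l, a s j l * (x l s - x j s))
        + (m:ℝ) * (x i s - x j s) - ((m:ℝ) - 1) * (M - μ) ≤ 0 := by
      have := hi1
      have := hj1
      nlinarith [hi1, hj1]
    have hg'val : g' s = ((m:ℝ) * Real.exp ((m:ℝ)*(s-t))) * (x i s - x j s)
        + Real.exp ((m:ℝ)*(s-t)) * ((∑ l, a s i l * (x l s - x i s)) - (∑ l, a s j l * (x l s - x j s)))
        - ((m:ℝ) - 1)/m * (M - μ) * ((m:ℝ) * Real.exp ((m:ℝ)*(s-t))) := rfl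
    have hfac : g' s = Real.exp ((m:ℝ)*(s-t)) * ((∑ l, a s i l * (x l s - x i s))
        - (∑ l, a s j l * (x l s - x j s)) + (m:ℝ) * (x i s - x j s) - ((m:ℝ) - 1) * (M - μ)) := by
      rw [hg'val]
      field_simp
      ring
    rw [hfac]
    exact mul_nonpos_of_nonneg_of_nonpos hE.le hbracket
  have hgend : g (t+τ) ≤ g t := deriv_nonpos_le (by linarith) hgd hg0
  have hgt : g t = x i t - x j t := by rw [hg]; simp
  have hyt : x i t - x j t ≤ M - μ := by
    have h1 := hM t (by constructor <;> [exact le_refl t; linarith]) i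
    have h2 := hμ t (by constructor <;> [exact le_refl t; linarith]) j
    linarith
  have hfinal : Real.exp ((m:ℝ)*τ) * (x i (t+τ) - x j (t+τ))
      - ((m:ℝ) - 1)/m * (M - μ) * (Real.exp ((m:ℝ)*τ) - 1) ≤ M - μ := by
    have hval : g (t+τ) = Real.exp ((m:ℝ)*τ) * (x i (t+τ) - x j (t+τ))
        - ((m:ℝ) - 1)/m * (M - μ) * (Real.exp ((m:ℝ)*τ) - 1) := by rw [hg]; ring_nf
    rw [← hval]
    linarith
  have hEτ : Real.exp (-(m:ℝ)*τ) * Real.exp ((m:ℝ)*τ) = 1 := by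
    rw [← Real.exp_add]; ring_nf; exact Real.exp_zero
  have hEpos : (0:ℝ) < Real.exp (-(m:ℝ)*τ) := Real.exp_pos _
  have hmul := mul_le_mul_of_nonneg_left hfinal hEpos.le
  have hexpand : Real.exp (-(m:ℝ)*τ) * (Real.exp ((m:ℝ)*τ) * (x i (t+τ) - x j (t+τ))
      - ((m:ℝ) - 1)/m * (M - μ) * (Real.exp ((m:ℝ)*τ) - 1))
      = Real.exp (-(m:ℝ)*τ) * Real.exp ((m:ℝ)*τ) * (x i (t+τ) - x j (t+τ))
      - ((m:ℝ) - 1)/m * (M - μ) * (Real.exp (-(m:ℝ)*τ) * Real.exp ((m:ℝ)*τ))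
      + ((m:ℝ) - 1)/m * (M - μ) * Real.exp (-(m:ℝ)*τ) := by ring
  rw [hexpand, hEτ, one_mul, mul_one] at hmul
  -- hmul : y(t+τ) - (m-1)/m (M-μ) + (m-1)/m (M-μ) E ≤ E (M-μ)
  have hiden : (M - μ) * (1 - (1 - Real.exp (-(m:ℝ)*τ)) / m)
      = ((m:ℝ) - 1)/m * (M - μ) - ((m:ℝ) - 1)/m * (M - μ) * Real.exp (-(m:ℝ)*τ)
        + Real.exp (-(m:ℝ)*τ) * (M - μ) := by
    field_simp
    ring
  rw [hiden]
  linarith [hmul]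
end scalar3

lemma c0_ineq (m : ℕ) (hm : 1 ≤ m) {τ : ℝ} (hτ : 0 ≤ τ) :
    (1 / ((m : ℝ) + 1)) * (1 - Real.exp (-((m : ℝ) + 1) * τ)) ≤ (1 - Real.exp (-(m:ℝ)*τ)) / m := by
  have hm0 : (0:ℝ) < m := by exact_mod_cast Nat.pos_of_ne_zero (by omega)
  have hE : Real.exp (-(m:ℝ)*τ) * Real.exp ((m:ℝ)*τ) = 1 := by
    rw [← Real.exp_add]; ring_nf; exact Real.exp_zero
  have hEF : Real.exp (-((m:ℝ)+1)*τ) = Real.exp (-(m:ℝ)*τ) * Real.exp (-τ) := by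
    rw [← Real.exp_add]; ring_nf
  have h1 : 1 - τ ≤ Real.exp (-τ) := by linarith [Real.add_one_le_exp (-τ)]
  have h2 : 1 + (m:ℝ)*τ ≤ Real.exp ((m:ℝ)*τ) := by linarith [Real.add_one_le_exp ((m:ℝ)*τ)]
  have hEpos : 0 < Real.exp (-(m:ℝ)*τ) := Real.exp_pos _
  have c1 : Real.exp (-(m:ℝ)*τ) * (1 + (m:ℝ)*τ) ≤ 1 := by
    calc Real.exp (-(m:ℝ)*τ) * (1 + (m:ℝ)*τ) ≤ Real.exp (-(m:ℝ)*τ) * Real.exp ((m:ℝ)*τ) :=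
          mul_le_mul_of_nonneg_left h2 hEpos.le
      _ = 1 := hE
  have c2 : Real.exp (-(m:ℝ)*τ) * (1 + (m:ℝ)*(1 - Real.exp (-τ))) ≤
      Real.exp (-(m:ℝ)*τ) * (1 + (m:ℝ)*τ) := by
    apply mul_le_mul_of_nonneg_left _ hEpos.le
    nlinarith [h1, hm0.le]
  have claim : Real.exp (-(m:ℝ)*τ) * (1 + (m:ℝ)*(1 - Real.exp (-τ))) ≤ 1 := c2.trans c1
  rw [one_div, inv_mul_eq_div, div_le_div_iff₀ (by linarith) hm0, hEF]
  nlinarith [claim]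

end helpers

noncomputable def hierSU {n : ℕ} (ta : Fin n → Fin n → ℝ) (r : Fin n) :
    ℕ → Finset (Fin n) × Finset (Fin n)
  | 0 => ({r}, {r})
  | k + 1 =>
      let p := hierSU ta r k
      let s := (Finset.univ.filter fun i => ∃ j ∈ p.1, ta i j = 1) \ p.2
      (s, p.2 ∪ s)

noncomputable def hierU {n : ℕ} (ta : Fin n → Fin n → ℝ) (r : Fin n) (k : ℕ) :
    Finset (Fin n) :=
  (hierSU ta r k).2

noncomputable def hierAlpha {n : ℕ} (ta : Fin n → Fin n → ℝ) (r : Fin n) (k : ℕ) : ℝ :=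
  sInf ((fun i => ∑ j ∈ hierU ta r k, ta i j) '' ↑(hierU ta r (k + 1)))

def HypOne {n : ℕ} (m D : ℕ) (ta : Fin n → Fin n → ℝ) (r : Fin n)
    (a : Fin n → Fin n → ℝ) : Prop :=
  (∀ i ∈ hierU ta r 1, a i r = 1) ∧
  ∀ k : ℕ, 1 ≤ k → k ≤ D - 1 → ∀ i ∈ hierU ta r (k + 1),
    hierAlpha ta r k ≤ ∑ j ∈ hierU ta r k, a i j ∧
    ∑ j ∈ (hierU ta r k)ᶜ, a i j ≤ (m : ℝ) - hierAlpha ta r k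

noncomputable def sdiam {n d : ℕ} (S : Set (Fin n))
    (v : Fin n → EuclideanSpace ℝ (Fin d)) : ℝ :=
  sSup {x | ∃ i ∈ S, ∃ j ∈ S, x = ‖v i - v j‖}

noncomputable def cfun (m : ℕ) (α : ℕ → ℝ) (k : ℕ) (τ : ℝ) : ℝ :=
  if k = 0 then (1 / ((m : ℝ) + 1)) * (1 - Real.exp (-((m : ℝ) + 1) * τ))
  else Real.exp (-(m : ℝ) * τ) * (Real.exp (α k * τ) - 1)

theorem stmt3 {n d : ℕ} (m D : ℕ) (hm : 1 ≤ m)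
    (ta : Fin n → Fin n → ℝ) (hta : ∀ i j, ta i j = 0 ∨ ta i j = 1)
    (r : Fin n)
    (hspan : hierU ta r D = Finset.univ)
    (hdepth : ∀ k < D, hierU ta r k ≠ Finset.univ)
    (a : ℝ → Fin n → Fin n → ℝ)
    (ha01 : ∀ t i j, a t i j = 0 ∨ a t i j = 1)
    (hreg : ∀ t i, ∑ j, a t i j = (m : ℝ))
    (v : ℝ → Fin n → EuclideanSpace ℝ (Fin d))
    (k : ℕ) (hk : k < D)
    (t0 t τ : ℝ) (ht0 : t0 ≤ t) (hτ : 0 ≤ τ)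
    (htraj : ∀ i : Fin n, ∀ u ∈ Set.Icc t0 (t + τ),
      HasDerivAt (fun w => v w i) (∑ j, a u i j • (v u j - v u i)) u)
    (hhyp : ∀ u ∈ Set.Icc t (t + τ), HypOne m D ta r (a u)) :
    sdiam ↑(hierU ta r (k + 1)) (v (t + τ)) ≤
      sdiam Set.univ (v t0) -
        cfun m (hierAlpha ta r) k τ *
          (sdiam Set.univ (v t0) - sdiam ↑(hierU ta r k) (v t)) := by
  classical
  have hn : (Finset.univ : Finset (Fin n)).Nonempty := ⟨r, Finset.mem_univ r⟩
  have httτ : t ≤ t + τ := by linarith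
  have h0tτ : t0 ≤ t + τ := by linarith
  have htmem : t ∈ Set.Icc t (t + τ) := ⟨le_refl t, httτ⟩
  have hIccsub : Set.Icc t (t + τ) ⊆ Set.Icc t0 (t + τ) := Set.Icc_subset_Icc_left ht0
  -- structure of hierU
  have hUsucc : ∀ l, ∃ s : Finset (Fin n), hierU ta r (l+1) = hierU ta r l ∪ s :=
    fun l => ⟨_, rfl⟩
  have hrU : ∀ l, r ∈ hierU ta r l := by
    intro l
    induction l with
    | zero => exact Finset.mem_singleton_self r
    | succ l ih =>
        obtain ⟨s, hs⟩ := hUsucc l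
        rw [hs]
        exact Finset.mem_union_left _ ih
  have hUsub : ∀ l, hierU ta r l ⊆ hierU ta r (l+1) := by
    intro l
    obtain ⟨s, hs⟩ := hUsucc l
    rw [hs]
    exact Finset.subset_union_left
  have hUkne : (hierU ta r k).Nonempty := ⟨r, hrU k⟩
  have hUk1ne : (hierU ta r (k+1)).Nonempty := ⟨r, hrU (k+1)⟩
  have ha0 : ∀ s i j, 0 ≤ a s i j := by
    intro s i j
    rcases ha01 s i j with h | h <;> rw [h] <;> norm_num
  -- α facts
  set α : ℝ := hierAlpha ta r k with hαdef
  have hα0 : 0 ≤ α := by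
    rw [hαdef, hierAlpha]
    apply Real.sInf_nonneg
    rintro y ⟨i, hi, rfl⟩
    exact Finset.sum_nonneg fun j _ => by rcases hta i j with h | h <;> rw [h] <;> norm_num
  have hαm : 1 ≤ k → α ≤ m := by
    intro hk1
    have h := ((hhyp t htmem).2 k hk1 (by omega) r (hrU (k+1))).1
    have h2 : ∑ j ∈ hierU ta r k, a t r j ≤ ∑ j, a t r j :=
      Finset.sum_le_sum_of_subset_of_nonneg (Finset.subset_univ _) fun j _ _ => ha0 t r j
    rw [hreg t r] at h2
    linarith
  set c : ℝ := cfun m (hierAlpha ta r) k τ with hcdef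
  have hEτpos : (0:ℝ) < Real.exp (-(m:ℝ)*τ) := Real.exp_pos _
  have hc01 : 0 ≤ c ∧ c ≤ 1 := by
    rcases Nat.eq_zero_or_pos k with hk0 | hk1
    · subst hk0
      have h1 : Real.exp (-((m:ℝ)+1)*τ) ≤ 1 :=
        Real.exp_le_one_iff.2 (by nlinarith [Nat.cast_nonneg (α := ℝ) m])
      have h2 : (0:ℝ) < Real.exp (-((m:ℝ)+1)*τ) := Real.exp_pos _
      have hm1 : (1:ℝ) ≤ (m:ℝ) + 1 := by linarith [Nat.cast_nonneg (α := ℝ) m]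
      have hcval0 : c = (1 / ((m:ℝ) + 1)) * (1 - Real.exp (-((m:ℝ)+1) * τ)) := by
        rw [hcdef]; simp [cfun]
      rw [hcval0]
      constructor
      · apply mul_nonneg (by positivity) (by linarith)
      · rw [one_div]
        have : ((m:ℝ)+1)⁻¹ ≤ 1 := by
          rw [inv_le_one_iff₀]; right; linarith
        nlinarith
    · have hkne : k ≠ 0 := by omega
      have hαm' := hαm hk1
      have he1 : (1:ℝ) ≤ Real.exp (α * τ) := Real.one_le_exp (mul_nonneg hα0 hτ)
      have he2 : Real.exp (-(m:ℝ)*τ) * Real.exp (α*τ) = Real.exp ((α - m)*τ) := by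
        rw [← Real.exp_add]; ring_nf
      have he3 : Real.exp ((α - m)*τ) ≤ 1 :=
        Real.exp_le_one_iff.2 (mul_nonpos_of_nonpos_of_nonneg (by linarith) hτ)
      have hcvalk : c = Real.exp (-(m:ℝ) * τ) * (Real.exp (α * τ) - 1) := by
        rw [hcdef]; simp [cfun, hkne, hαdef]
      rw [hcvalk]
      constructor
      · apply mul_nonneg hEτpos.le (by linarith)
      · nlinarith
  -- scalar projections
  set X : EuclideanSpace ℝ (Fin d) → Fin n → ℝ → ℝ :=
    fun e i s => (inner ℝ e (v s i) : ℝ) with hXdef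
  have hXd : ∀ (e : EuclideanSpace ℝ (Fin d)) (i : Fin n), ∀ s ∈ Set.Icc t0 (t+τ),
      HasDerivAt (X e i) (∑ j, a s i j * (X e j s - X e i s)) s := by
    intro e i s hs
    have h := (innerSL ℝ e).hasFDerivAt.comp_hasDerivAt s (htraj i s hs)
    have hval : (innerSL ℝ e) (∑ j, a s i j • (v s j - v s i))
        = ∑ j, a s i j * (X e j s - X e i s) := by
      rw [map_sum]
      apply Finset.sum_congr rfl
      intro j _
      rw [ContinuousLinearMap.map_smul]
      rw [hXdef]
      simp only [innerSL_apply_apply, smul_eq_mul, inner_sub_right]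
    rw [hval] at h
    exact h
  have hXneg : ∀ e i s, X (-e) i s = - X e i s := by
    intro e i s
    rw [hXdef]
    simp [inner_neg_left]
  set Mx : EuclideanSpace ℝ (Fin d) → ℝ :=
    fun e => Finset.univ.sup' hn fun i => X e i t0 with hMxdef
  have hinv : ∀ e, ∀ s ∈ Set.Icc t0 (t+τ), ∀ i, X e i s ≤ Mx e :=
    fun e => scalar_inv hn ha0 h0tτ (hXd e)
  have hinv' : ∀ e, ∀ s ∈ Set.Icc t (t+τ), ∀ i, X e i s ≤ Mx e :=
    fun e s hs i => hinv e s (hIccsub hs) i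
  set MU : EuclideanSpace ℝ (Fin d) → ℝ :=
    fun e => (hierU ta r k).sup' hUkne fun i => X e i t with hMUdef
  have hApos : ∀ e, 0 ≤ Mx e + Mx (-e) := by
    intro e
    have h1 : X e r t0 ≤ Mx e := Finset.le_sup' (fun i => X e i t0) (Finset.mem_univ r)
    have h2 : X (-e) r t0 ≤ Mx (-e) := Finset.le_sup' (fun i => X (-e) i t0) (Finset.mem_univ r)
    rw [hXneg] at h2
    linarith
  -- the per-direction pair bound
  have hpair : ∀ (e : EuclideanSpace ℝ (Fin d)), ∀ i ∈ hierU ta r (k+1), ∀ j ∈ hierU ta r (k+1),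
      X e i (t+τ) - X e j (t+τ) ≤
        (1 - c) * (Mx e + Mx (-e)) + c * (MU e + MU (-e)) := by
    intro e i hi j hj
    have hxe : ∀ i, ∀ s ∈ Set.Icc t (t+τ),
        HasDerivAt (X e i) (∑ j, a s i j * (X e j s - X e i s)) s :=
      fun i s hs => hXd e i s (hIccsub hs)
    have hxne : ∀ i, ∀ s ∈ Set.Icc t (t+τ),
        HasDerivAt (X (-e) i) (∑ j, a s i j * (X (-e) j s - X (-e) i s)) s :=
      fun i s hs => hXd (-e) i s (hIccsub hs)
    rcases Nat.eq_zero_or_pos k with hk0 | hk1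
    · -- k = 0
      subst hk0
      have hMU0 : MU e + MU (-e) = 0 := by
        rw [hMUdef]
        have h0 : hierU ta r 0 = {r} := rfl
        simp only [h0, Finset.sup'_singleton]
        rw [hXneg]
        ring
      have hir : ∀ s ∈ Set.Icc t (t+τ), a s i r = 1 := fun s hs => (hhyp s hs).1 i hi
      have hjr : ∀ s ∈ Set.Icc t (t+τ), a s j r = 1 := fun s hs => (hhyp s hs).1 j hj
      have hμ : ∀ s ∈ Set.Icc t (t+τ), ∀ i, -Mx (-e) ≤ X e i s := by
        intro s hs i
        have := hinv' (-e) s hs i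
        rw [hXneg] at this
        linarith
      have hres := scalar_k0 (M := Mx e) (μ := -Mx (-e)) hm hτ ha0 hreg hxe
        (hinv' e) hμ hir hjr
      have hAnn := hApos e
      have hcle : c ≤ (1 - Real.exp (-(m:ℝ)*τ)) / m := by
        have hcval0 : c = (1 / ((m:ℝ) + 1)) * (1 - Real.exp (-((m:ℝ)+1) * τ)) := by
          rw [hcdef]; simp [cfun]
        rw [hcval0]
        exact c0_ineq m hm hτ
      have hq1 : (1 - Real.exp (-(m:ℝ)*τ)) / m ≤ 1 := by
        have hm0 : (0:ℝ) < m := by exact_mod_cast Nat.pos_of_ne_zero (by omega)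
        rw [div_le_one hm0]
        have : (1:ℝ) ≤ (m:ℝ) := by exact_mod_cast hm
        nlinarith [hEτpos.le]
      rw [hMU0, mul_zero, add_zero]
      have hmono : (Mx e + Mx (-e)) * (1 - (1 - Real.exp (-(m:ℝ)*τ)) / m)
          ≤ (Mx e + Mx (-e)) * (1 - c) :=
        mul_le_mul_of_nonneg_left (by linarith) hAnn
      have heq : Mx e - - Mx (-e) = Mx e + Mx (-e) := by ring
      rw [heq] at hres
      calc X e i (t+τ) - X e j (t+τ)
          ≤ (Mx e + Mx (-e)) * (1 - (1 - Real.exp (-(m:ℝ)*τ)) / m) := hres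
        _ ≤ (Mx e + Mx (-e)) * (1 - c) := hmono
        _ = (1 - c) * (Mx e + Mx (-e)) := by ring
    · -- k ≥ 1
      have hkne : k ≠ 0 := by omega
      have hkD : k ≤ D - 1 := by omega
      have hout : ∀ s ∈ Set.Icc t (t+τ), ∀ i' ∈ hierU ta r k,
          ∑ j ∈ (hierU ta r k)ᶜ, a s i' j ≤ (m:ℝ) - α :=
        fun s hs i' hi' => ((hhyp s hs).2 k hk1 hkD i' (hUsub k hi')).2
      have hcval : c = Real.exp (-(m:ℝ)*τ) * (Real.exp (α*τ) - 1) := by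
        rw [hcdef]; simp [cfun, hkne, hαdef]
      have single : ∀ (e' : EuclideanSpace ℝ (Fin d)) (p : Fin n), p ∈ hierU ta r (k+1) →
          X e' p (t+τ) ≤ Mx e' - Real.exp (-(m:ℝ)*τ) * (Real.exp (α*τ) - 1) *
            (Mx e' - MU e') := by
        intro e' p hp
        have hxe' : ∀ i, ∀ s ∈ Set.Icc t (t+τ),
            HasDerivAt (X e' i) (∑ j, a s i j * (X e' j s - X e' i s)) s :=
          fun i s hs => hXd e' i s (hIccsub hs)
        have hstep2 := scalar_step2 (S := hierU ta r k) hUkne (M := Mx e') (α := α)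
          hτ ha0 hreg hxe' (hinv' e') hout
        have hB : ∀ s ∈ Set.Icc t (t+τ), ∀ j ∈ hierU ta r k, X e' j s ≤
            Mx e' + (((hierU ta r k).sup' hUkne fun l => X e' l t) - Mx e') *
              Real.exp ((α - m) * (s - t)) :=
          fun s hs j hj => le_trans (Finset.le_sup' (fun l => X e' l s) hj) (hstep2 s hs)
        have hin : ∀ s ∈ Set.Icc t (t+τ), α ≤ ∑ j ∈ hierU ta r k, a s p j :=
          fun s hs => ((hhyp s hs).2 k hk1 hkD p hp).1
        exact scalar_step3 hUkne hτ ha0 hreg hα0 hxe' (hinv' e') hB hin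
      have h1 := single e i hi
      have h2 := single (-e) j hj
      rw [hXneg] at h2
      rw [hcval]
      linarith
  -- assembling the diameters
  have hbdd : ∀ (S : Set (Fin n)) (w : Fin n → EuclideanSpace ℝ (Fin d)),
      BddAbove {x | ∃ i ∈ S, ∃ j ∈ S, x = ‖w i - w j‖} := by
    intro S w
    apply Set.Finite.bddAbove
    apply Set.Finite.subset (Set.finite_range fun p : Fin n × Fin n => ‖w p.1 - w p.2‖)
    rintro x ⟨i, _, j, _, rfl⟩
    exact ⟨(i, j), rfl⟩
  have hmem_le : ∀ (S : Set (Fin n)) (w : Fin n → EuclideanSpace ℝ (Fin d)) i j,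
      i ∈ S → j ∈ S → ‖w i - w j‖ ≤ sdiam S w :=
    fun S w i j hi hj => le_csSup (hbdd S w) ⟨i, hi, j, hj, rfl⟩
  set Δ0 : ℝ := sdiam Set.univ (v t0) with hΔ0def
  set Δk : ℝ := sdiam ↑(hierU ta r k) (v t) with hΔkdef
  have hΔ0 : 0 ≤ Δ0 := by
    have := hmem_le Set.univ (v t0) r r (Set.mem_univ r) (Set.mem_univ r)
    rw [sub_self, norm_zero] at this
    exact this
  have hΔk : 0 ≤ Δk := by
    have hrc : r ∈ (↑(hierU ta r k) : Set (Fin n)) := Finset.mem_coe.2 (hrU k)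
    have := hmem_le _ (v t) r r hrc hrc
    rw [sub_self, norm_zero] at this
    exact this
  have hA_le : ∀ (e : EuclideanSpace ℝ (Fin d)), ‖e‖ = 1 → Mx e + Mx (-e) ≤ Δ0 := by
    intro e he
    obtain ⟨i', _, hi'⟩ := Finset.exists_mem_eq_sup' hn fun i => X e i t0
    obtain ⟨j', _, hj'⟩ := Finset.exists_mem_eq_sup' hn fun i => X (-e) i t0
    have hsum : Mx e + Mx (-e) = (inner ℝ e (v t0 i' - v t0 j') : ℝ) := by
      rw [hMxdef]
      simp only
      rw [hi', hj', hXneg, hXdef]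
      simp only [inner_sub_right]
      ring
    rw [hsum]
    calc (inner ℝ e (v t0 i' - v t0 j') : ℝ) ≤ ‖e‖ * ‖v t0 i' - v t0 j'‖ := real_inner_le_norm _ _
      _ = ‖v t0 i' - v t0 j'‖ := by rw [he, one_mul]
      _ ≤ Δ0 := hmem_le Set.univ (v t0) i' j' (Set.mem_univ _) (Set.mem_univ _)
  have hB_le : ∀ (e : EuclideanSpace ℝ (Fin d)), ‖e‖ = 1 → MU e + MU (-e) ≤ Δk := by
    intro e he
    obtain ⟨i', hi'm, hi'⟩ := Finset.exists_mem_eq_sup' hUkne fun i => X e i t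
    obtain ⟨j', hj'm, hj'⟩ := Finset.exists_mem_eq_sup' hUkne fun i => X (-e) i t
    have hsum : MU e + MU (-e) = (inner ℝ e (v t i' - v t j') : ℝ) := by
      rw [hMUdef]
      simp only
      rw [hi', hj', hXneg, hXdef]
      simp only [inner_sub_right]
      ring
    rw [hsum]
    calc (inner ℝ e (v t i' - v t j') : ℝ) ≤ ‖e‖ * ‖v t i' - v t j'‖ := real_inner_le_norm _ _
      _ = ‖v t i' - v t j'‖ := by rw [he, one_mul]
      _ ≤ Δk := hmem_le _ (v t) i' j' (Finset.mem_coe.2 hi'm) (Finset.mem_coe.2 hj'm)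
  have hRHS : 0 ≤ Δ0 - c * (Δ0 - Δk) := by
    nlinarith [hc01.1, hc01.2, hΔ0, hΔk, mul_nonneg hc01.1 hΔk,
      mul_nonneg (by linarith [hc01.2] : (0:ℝ) ≤ 1 - c) hΔ0]
  apply Real.sSup_le _ hRHS
  rintro y ⟨i, hi, j, hj, rfl⟩
  by_cases hw : v (t+τ) i - v (t+τ) j = 0
  · rw [hw, norm_zero]
    exact hRHS
  · set w := v (t+τ) i - v (t+τ) j with hwdef
    set e : EuclideanSpace ℝ (Fin d) := (‖w‖⁻¹ : ℝ) • w with hedef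
    have he : ‖e‖ = 1 := norm_smul_inv_norm hw
    have hew : (inner ℝ e w : ℝ) = ‖w‖ := by
      rw [hedef, real_inner_smul_left, real_inner_self_eq_norm_mul_norm]
      have : ‖w‖ ≠ 0 := norm_ne_zero_iff.2 hw
      field_simp
    have hXdiff : X e i (t+τ) - X e j (t+τ) = ‖w‖ := by
      rw [← hew, hwdef, hXdef]
      simp only [inner_sub_right]
    have hp := hpair e i (Finset.mem_coe.1 hi) j (Finset.mem_coe.1 hj)
    rw [hXdiff] at hp
    have hmono1 : (1 - c) * (Mx e + Mx (-e)) ≤ (1 - c) * Δ0 :=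
      mul_le_mul_of_nonneg_left (hA_le e he) (by linarith [hc01.2])
    have hmono2 : c * (MU e + MU (-e)) ≤ c * Δk :=
      mul_le_mul_of_nonneg_left (hB_le e he) hc01.1
    calc ‖w‖ ≤ (1 - c) * (Mx e + Mx (-e)) + c * (MU e + MU (-e)) := hp
      _ ≤ (1 - c) * Δ0 + c * Δk := by linarith
      _ = Δ0 - c * (Δ0 - Δk) := by ring
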